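/- Suppose X ≠ {0}. Then for every k ∈ I, the operator R_k is not nonexpansive: there exists x ∈ 𝐗 with ‖R_k x‖ > ‖x‖ (indeed, for a unit vector u ∈ X and x with x_i = u for i ≠ k and x_k = 0, one has ‖R_k x‖² = m > m − 1 = ‖x‖²). Moreover, the composition R_m ∘ ⋯ ∘ R_2 ∘ R_1 is not nonexpansive: there exists x ∈ 𝐗 with ‖(R_m ∘ ⋯ ∘ R_1)x‖ > ‖x‖. -/

import Mathlib

/-- If `X ≠ {0}`, then no `R_k` is nonexpansive, and neither is the
composition `R_m ∘ ⋯ ∘ R_2 ∘ R_1` (the fold applies `R` with index `0` first). -/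
theorem Rk_and_composition_not_nonexpansive
    {X : Type*} [NormedAddCommGroup X] [InnerProductSpace ℝ X] [Nontrivial X]
    (m : ℕ) (hm : 2 ≤ m)
    (lam : Fin m → ℝ) (hlam : ∀ i, lam i ∈ Set.Ioo (0 : ℝ) 1)
    (hsum : ∑ i, lam i = 1)
    (mu : Fin m → ℝ) (hmu : ∀ i, mu i = 1 - lam i)
    (Rk : Fin m → PiLp 2 (fun _ : Fin m => X) → PiLp 2 (fun _ : Fin m => X))
    (hRk : ∀ k x i, Rk k x i =
      if i = k then ∑ j ∈ Finset.univ.erase k, (lam j / mu k) • x j else x i) :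
    (∀ k, ∃ x, ‖x‖ < ‖Rk k x‖) ∧
      (∃ x, ‖x‖ < ‖List.foldl (fun y k => Rk k y) x (List.finRange m)‖) := by
  obtain ⟨v, hv⟩ := exists_ne (0 : X)
  set u : X := ‖v‖⁻¹ • v with hu
  have hun : ‖u‖ = 1 := by
    rw [hu, norm_smul, norm_inv, norm_norm, inv_mul_cancel₀ (norm_ne_zero_iff.mpr hv)]
  have hmu_pos : ∀ k, 0 < mu k := fun k => by rw [hmu]; linarith [(hlam k).2]
  have hsumerase : ∀ k : Fin m, ∑ j ∈ Finset.univ.erase k, lam j = mu k := by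
    intro k
    have h := Finset.sum_erase_add Finset.univ lam (Finset.mem_univ k)
    rw [hmu]; linarith [hsum]
  set c : PiLp 2 (fun _ : Fin m => X) := WithLp.toLp 2 (fun _ => u) with hc
  -- key sum
  have keysum : ∀ k : Fin m, ∑ j ∈ Finset.univ.erase k, (lam j / mu k) • u = u := by
    intro k
    rw [← Finset.sum_smul, ← Finset.sum_div, hsumerase,
      div_self (hmu_pos k).ne', one_smul]
  have lemA : ∀ k, Rk k c = c := by
    intro k
    ext i
    rw [hRk]
    split_ifs with h
    · exact keysum k
    · rfl
  set xk : Fin m → PiLp 2 (fun _ : Fin m => X) :=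
    fun k => WithLp.toLp 2 (fun i => if i = k then 0 else u) with hxk
  have lemB : ∀ k, Rk k (xk k) = c := by
    intro k
    ext i
    rw [hRk]
    split_ifs with h
    · show _ = u
      rw [← keysum k]
      refine Finset.sum_congr rfl fun j hj => ?_
      have : xk k j = u := by
        simp only [hxk, if_neg (Finset.ne_of_mem_erase hj)]
      rw [this]
    · simp only [hxk, if_neg h, hc]
  have hnormc : ‖c‖ ^ 2 = (m : ℝ) := by
    rw [PiLp.norm_sq_eq_of_L2]
    simp [hc, hun]
  have hnormxk : ∀ k, ‖xk k‖ ^ 2 = (m : ℝ) - 1 := by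
    intro k
    rw [PiLp.norm_sq_eq_of_L2]
    have : ∀ i : Fin m, ‖xk k i‖ ^ 2 = if i = k then 0 else 1 := by
      intro i
      simp only [hxk]
      split_ifs <;> simp [hun]
    rw [Finset.sum_congr rfl fun i _ => this i,
      ← Finset.sum_erase_add _ _ (Finset.mem_univ k), if_pos rfl, add_zero,
      Finset.sum_congr rfl (fun i hi => if_neg (Finset.ne_of_mem_erase hi)),
      Finset.sum_const, nsmul_eq_mul, mul_one,
      Finset.card_erase_of_mem (Finset.mem_univ k), Finset.card_univ, Fintype.card_fin,
      Nat.cast_sub (by omega), Nat.cast_one]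
  have hlt : ∀ k, ‖xk k‖ < ‖c‖ := by
    intro k
    refine lt_of_pow_lt_pow_left₀ 2 (norm_nonneg c) ?_
    rw [hnormc, hnormxk]; linarith
  constructor
  · intro k
    exact ⟨xk k, by rw [lemB k]; exact hlt k⟩
  · haveI : NeZero m := ⟨by omega⟩
    obtain ⟨n, rfl⟩ : ∃ n, m = n + 1 := ⟨m - 1, by omega⟩
    refine ⟨xk 0, ?_⟩
    have hfold : ∀ (l : List (Fin (n+1))),
        List.foldl (fun y k => Rk k y) c l = c := by
      intro l
      induction l with
      | nil => rfl
      | cons a t ih => simp [List.foldl_cons, lemA a, ih]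
    rw [List.finRange_succ, List.foldl_cons, lemB 0, hfold]
    exact hlt 0
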